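/- Let α, β ∈ ℝ with α > 0, and let T : ℝ[x] → ℝ[x] be the linear map determined by T[x^n] = H_n^α(x − β), i.e., T[p] = Σ_n c_n · H_n^α(x − β) for p(x) = Σ_n c_n x^n. If p ∈ ℝ[x] has only real roots (p splits over ℝ), then T[p] also has only real roots. -/

import Mathlib

open Polynomial Finset

open Filter Set Topology

private lemma quad_ge (c α : ℝ) (hα : 0 < α) :
    ∀ᶠ x : ℝ in atTop, x ≤ (x - c)^2 / (2*α) := by
  filter_upwards [eventually_ge_atTop (2*|c|), eventually_ge_atTop (8*α)] with x h1 h2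
  rw [le_div_iff₀ (by positivity)]
  have hc1 : c ≤ |c| := le_abs_self c
  have hc2 : -c ≤ |c| := neg_le_abs c
  have hc0 : (0:ℝ) ≤ |c| := abs_nonneg c
  nlinarith [sq_nonneg (x - c), sq_nonneg x]

private lemma gauss_tendsto (q : ℝ[X]) (c α : ℝ) (hα : 0 < α) :
    Tendsto (fun x => Real.exp (-((x - c)^2 / (2*α))) * q.eval x) atTop (𝓝 0) := by
  apply squeeze_zero_norm' (a := fun x => |q.eval x / Real.exp x|)
  · filter_upwards [quad_ge c α hα] with x hx
    have h1 : Real.exp (-((x - c)^2 / (2*α))) ≤ Real.exp (-x) :=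
      Real.exp_le_exp.mpr (neg_le_neg hx)
    have h2 : (0:ℝ) < Real.exp x := Real.exp_pos x
    calc ‖Real.exp (-((x - c)^2 / (2*α))) * q.eval x‖
        = Real.exp (-((x - c)^2 / (2*α))) * |q.eval x| := by
          rw [Real.norm_eq_abs, abs_mul, Real.abs_exp]
      _ ≤ Real.exp (-x) * |q.eval x| := mul_le_mul_of_nonneg_right h1 (abs_nonneg _)
      _ = |q.eval x / Real.exp x| := by
          rw [abs_div, Real.abs_exp, Real.exp_neg, mul_comm, div_eq_mul_inv]
  · have := (q.tendsto_div_exp_atTop).abs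
    simpa using this

private lemma gauss_tendsto_bot (q : ℝ[X]) (c α : ℝ) (hα : 0 < α) :
    Tendsto (fun x => Real.exp (-((x - c)^2 / (2*α))) * q.eval x) atBot (𝓝 0) := by
  have h := (gauss_tendsto (q.comp (-X)) (-c) α hα).comp tendsto_neg_atBot_atTop
  refine h.congr fun x => ?_
  simp only [Function.comp_apply, eval_comp, eval_neg, eval_X, neg_neg]
  congr 2
  ring

private lemma gauss_hasDerivAt (q : ℝ[X]) (c α : ℝ) (hα : 0 < α) (x : ℝ) :
    HasDerivAt (fun y => Real.exp (-((y - c)^2 / (2*α))) * q.eval y)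
      (Real.exp (-((x - c)^2 / (2*α))) * (-(1/α)) *
        (((X - C c) * q - C α * derivative q).eval x)) x := by
  have h0 : HasDerivAt (fun y : ℝ => y - c) 1 x := (hasDerivAt_id x).sub_const c
  have h1 : HasDerivAt (fun y : ℝ => -((y - c)^2 / (2*α))) (-((x - c)/α)) x := by
    have := ((h0.pow 2).div_const (2*α)).neg
    refine this.congr_deriv ?_
    field_simp
    ring
  have h3 := (h1.exp).mul (q.hasDerivAt x)
  refine h3.congr_deriv ?_
  have hα' : α ≠ 0 := ne_of_gt hα
  simp only [eval_sub, eval_mul, eval_C, eval_X]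
  field_simp
  ring

private lemma outer_root_pos (g : ℝ → ℝ) (hg : Differentiable ℝ g) (b t : ℝ) (hbt : b < t)
    (hgb : g b = 0) (hgt : 0 < g t) (hlim : Tendsto g atTop (𝓝 0)) :
    ∃ x, b < x ∧ deriv g x = 0 := by
  obtain ⟨N, hN⟩ := eventually_atTop.mp (hlim.eventually_lt_const hgt)
  set N' : ℝ := max N t + 1 with hN'
  have htN : t < N' := lt_of_le_of_lt (le_max_right N t) (lt_add_one _)
  have hbN : b < N' := hbt.trans htN
  obtain ⟨x, hxmem, hxmax⟩ := isCompact_Icc.exists_isMaxOn (Set.nonempty_Icc.mpr hbN.le)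
    (hg.continuous.continuousOn)
  have hxt : g t ≤ g x := hxmax ⟨hbt.le, htN.le⟩
  have hxb : x ≠ b := fun h => by rw [h, hgb] at hxt; exact absurd hxt (not_le.mpr hgt)
  have hgN' : g N' < g t := hN N' (le_trans (le_max_left N t) (le_of_lt (lt_add_one _)))
  have hxN : x ≠ N' := fun h => by rw [h] at hxt; exact absurd hxt (not_le.mpr hgN')
  have hxIoo : x ∈ Set.Ioo b N' :=
    ⟨lt_of_le_of_ne hxmem.1 (Ne.symm hxb), lt_of_le_of_ne hxmem.2 hxN⟩
  exact ⟨x, hxIoo.1, (hxmax.isLocalMax (Icc_mem_nhds hxIoo.1 hxIoo.2)).deriv_eq_zero⟩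

private lemma outer_root (g : ℝ → ℝ) (hg : Differentiable ℝ g) (b t : ℝ) (hbt : b < t)
    (hgb : g b = 0) (hgt : g t ≠ 0) (hlim : Tendsto g atTop (𝓝 0)) :
    ∃ x, b < x ∧ deriv g x = 0 := by
  rcases hgt.lt_or_gt with h | h
  · obtain ⟨x, hx1, hx2⟩ := outer_root_pos (fun y => -g y) (hg.neg) b t hbt
      (by simp [hgb]) (by simpa using h) (by simpa using hlim.neg)
    refine ⟨x, hx1, ?_⟩
    have : deriv (fun y => -g y) x = -deriv g x := deriv.neg
    rw [this] at hx2
    linarith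
  · exact outer_root_pos g hg b t hbt hgb h hlim

private lemma sum_count_le {A : Finset ℝ} {M : Multiset ℝ} :
    ∑ x ∈ A, M.count x ≤ Multiset.card M := by
  classical
  have h1 : ∑ x ∈ A, M.count x = ∑ x ∈ A ∩ M.toFinset, M.count x := by
    refine (Finset.sum_subset Finset.inter_subset_left fun x hxA hxn => ?_).symm
    rw [Multiset.count_eq_zero]
    intro hxM
    exact hxn (Finset.mem_inter.mpr ⟨hxA, Multiset.mem_toFinset.mpr hxM⟩)
  rw [h1, ← Multiset.toFinset_sum_count_eq M]
  exact Finset.sum_le_sum_of_subset Finset.inter_subset_right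

private lemma step_splits (α c : ℝ) (hα : 0 < α) (q : ℝ[X]) (hq : q ≠ 0)
    (hs : q.Splits) :
    ((X - C c) * q - C α * derivative q).Splits ∧
      ((X - C c) * q - C α * derivative q) ≠ 0 := by
  classical
  set f : ℝ[X] := (X - C c) * q - C α * derivative q with hfdef
  have hd1 : ((X - C c) * q).natDegree = q.natDegree + 1 := by
    rw [natDegree_mul (X_sub_C_ne_zero c) hq, natDegree_X_sub_C, add_comm]
  have hd2 : (C α * derivative q).natDegree < q.natDegree + 1 :=
    Nat.lt_succ_of_le ((natDegree_C_mul_le _ _).trans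
      ((natDegree_derivative_le q).trans (Nat.sub_le _ _)))
  have hdf : f.natDegree = q.natDegree + 1 := by
    rw [hfdef, natDegree_sub_eq_left_of_natDegree_lt (by rw [hd1]; exact hd2), hd1]
  have hf0 : f ≠ 0 := by
    intro h
    rw [h, natDegree_zero] at hdf
    exact Nat.succ_ne_zero _ hdf.symm
  refine ⟨?_, hf0⟩
  rcases Nat.eq_zero_or_pos q.natDegree with h0 | hpos
  · exact Splits.of_natDegree_le_one (by rw [hdf, h0])
  -- main case
  have hroots : Multiset.card q.roots = q.natDegree := splits_iff_card_roots.mp hs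
  have hroots_ne : q.roots ≠ 0 := by
    intro h
    rw [h] at hroots
    simp at hroots
    omega
  set s : Finset ℝ := q.roots.toFinset with hsdef
  have hs_ne : s.Nonempty := by
    obtain ⟨r, hr⟩ := Multiset.exists_mem_of_ne_zero hroots_ne
    exact ⟨r, Multiset.mem_toFinset.mpr hr⟩
  set a : ℝ := s.min' hs_ne with hadef
  set b : ℝ := s.max' hs_ne with hbdef
  set g : ℝ → ℝ := fun y => Real.exp (-((y - c)^2 / (2*α))) * q.eval y with hgdef
  have hg_deriv : ∀ x : ℝ, HasDerivAt g
      (Real.exp (-((x - c)^2 / (2*α))) * (-(1/α)) * f.eval x) x :=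
    fun x => gauss_hasDerivAt q c α hα x
  have hg_diff : Differentiable ℝ g := fun x => (hg_deriv x).differentiableAt
  have keyD : ∀ x : ℝ, Real.exp (-((x - c)^2 / (2*α))) * (-(1/α)) * f.eval x = 0 →
      f.eval x = 0 := by
    intro x hx
    rcases mul_eq_zero.mp hx with h | h
    · rcases mul_eq_zero.mp h with h' | h'
      · exact absurd h' (Real.exp_ne_zero _)
      · exfalso; rw [neg_eq_zero] at h'; exact (one_div_ne_zero (ne_of_gt hα)) h'
    · exact h
  have key : ∀ x : ℝ, deriv g x = 0 → f.eval x = 0 := fun x hx =>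
    keyD x (((hg_deriv x).deriv).symm.trans hx)
  have hg_root : ∀ r ∈ s, g r = 0 := by
    intro r hr
    have : q.eval r = 0 := (mem_roots hq).mp (Multiset.mem_toFinset.mp hr)
    simp [hgdef, this]
  have hq_out : ∀ x : ℝ, (∀ r ∈ s, r ≠ x) → q.eval x ≠ 0 := by
    intro x hx h
    exact hx x (Multiset.mem_toFinset.mpr ((mem_roots hq).mpr h)) rfl
  set t : Finset ℝ := f.roots.toFinset with htdef
  have tmem : ∀ x : ℝ, f.eval x = 0 → x ∈ t := fun x hx =>
    Multiset.mem_toFinset.mpr ((mem_roots hf0).mpr hx)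
  set tI : Finset ℝ := t.filter (fun z => a < z ∧ z < b) with htIdef
  have hinter : s.card ≤ (tI \ s).card + 1 := by
    refine Finset.card_le_diff_of_interleaved fun x hx y hy hxy _ => ?_
    obtain ⟨z, hz1, hz2⟩ := exists_deriv_eq_zero hxy (hg_diff.continuous.continuousOn)
      ((hg_root x hx).trans (hg_root y hy).symm)
    refine ⟨z, ?_, hz1.1, hz1.2⟩
    refine Finset.mem_filter.mpr ⟨tmem z (key z hz2), ?_, ?_⟩
    · exact lt_of_le_of_lt (s.min'_le x hx) hz1.1
    · exact lt_of_lt_of_le hz1.2 (s.le_max' y hy)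
  have hgb0 : g b = 0 := hg_root b (s.max'_mem hs_ne)
  have hgb1 : g (b + 1) ≠ 0 := by
    have hqe : q.eval (b+1) ≠ 0 := hq_out _ (fun r hr =>
      ne_of_lt (lt_of_le_of_lt (s.le_max' r hr) (lt_add_one b)))
    have hge : g (b+1) = Real.exp (-(((b+1) - c)^2 / (2*α))) * q.eval (b+1) := by rw [hgdef]
    rw [hge]
    exact mul_ne_zero (Real.exp_ne_zero _) hqe
  obtain ⟨xr, hxr1, hxr2⟩ := outer_root g hg_diff b (b+1) (lt_add_one b) hgb0 hgb1
    (gauss_tendsto q c α hα)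
  have hxr : f.eval xr = 0 := key xr hxr2
  have hga0 : g a = 0 := hg_root a (s.min'_mem hs_ne)
  obtain ⟨xl', hxl1, hxl2⟩ := outer_root (fun y => g (-y)) (hg_diff.comp differentiable_neg)
      (-a) (-(a-1)) (by linarith) (by simpa using hga0)
      (by
        have hqe : q.eval (a-1) ≠ 0 := hq_out _ (fun r hr =>
          ne_of_gt (lt_of_lt_of_le (by linarith) (s.min'_le r hr)))
        have hge : g (-(-(a-1))) = Real.exp (-(((a-1) - c)^2 / (2*α))) * q.eval (a-1) := by
          rw [hgdef, neg_neg]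
        show g (-(-(a-1))) ≠ 0
        rw [hge]
        exact mul_ne_zero (Real.exp_ne_zero _) hqe)
      ((gauss_tendsto_bot q c α hα).comp tendsto_neg_atTop_atBot)
  rw [deriv_comp_neg] at hxl2
  have hxl : f.eval (-xl') = 0 := key _ (neg_eq_zero.mp hxl2)
  set xl : ℝ := -xl' with hxldef
  have hxla : xl < a := by rw [hxldef]; linarith
  have hxr_t : xr ∈ t := tmem _ hxr
  have hxl_t : xl ∈ t := tmem _ hxl
  have hab : a ≤ b := s.min'_le b (s.max'_mem hs_ne)
  have hxl_not : xl ∉ insert xr (tI \ s) := by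
    intro h
    rcases Finset.mem_insert.mp h with h | h
    · rw [h] at hxla; linarith
    · have := (Finset.mem_filter.mp (Finset.mem_sdiff.mp h).1).2.1
      linarith
  have hxr_not : xr ∉ tI \ s := fun h => by
    have := (Finset.mem_filter.mp (Finset.mem_sdiff.mp h).1).2.2
    linarith
  set E : Finset ℝ := insert xl (insert xr (tI \ s)) with hEdef
  have hE_card : s.card + 1 ≤ E.card := by
    rw [hEdef, Finset.card_insert_of_notMem hxl_not, Finset.card_insert_of_notMem hxr_not]
    omega
  have hE_sub_t : E ⊆ t := by
    intro x hx
    rcases Finset.mem_insert.mp hx with h | h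
    · rw [h]; exact hxl_t
    rcases Finset.mem_insert.mp h with h | h
    · rw [h]; exact hxr_t
    · exact (Finset.mem_filter.mp (Finset.mem_sdiff.mp h).1).1
  have hE_disj : Disjoint s E := by
    rw [Finset.disjoint_right]
    intro x hx hxs
    rcases Finset.mem_insert.mp hx with h | h
    · rw [h] at hxs; linarith [s.min'_le xl hxs]
    rcases Finset.mem_insert.mp h with h | h
    · rw [h] at hxs; linarith [s.le_max' xr hxs]
    · exact (Finset.mem_sdiff.mp h).2 hxs
  have hsum : ∑ x ∈ s ∪ E, f.roots.count x ≤ Multiset.card f.roots := sum_count_le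
  have hsplit_sum : ∑ x ∈ s ∪ E, f.roots.count x
      = ∑ x ∈ s, f.roots.count x + ∑ x ∈ E, f.roots.count x := Finset.sum_union hE_disj
  have hA : ∀ x ∈ s, q.roots.count x - 1 ≤ f.roots.count x := by
    intro r hr
    rw [count_roots, count_roots]
    have h1 : (X - C r) ^ (rootMultiplicity r q - 1) ∣ q :=
      dvd_trans (pow_dvd_pow _ (Nat.sub_le _ _)) (q.pow_rootMultiplicity_dvd r)
    have h2 : (X - C r) ^ (rootMultiplicity r q - 1) ∣ derivative q :=
      dvd_trans (pow_dvd_pow _ (q.rootMultiplicity_sub_one_le_derivative_rootMultiplicity r))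
        ((derivative q).pow_rootMultiplicity_dvd r)
    exact (le_rootMultiplicity_iff hf0).mpr (dvd_sub (h1.mul_left _) (h2.mul_left _))
  have hsum_s : ∑ x ∈ s, (q.roots.count x - 1) + s.card = q.natDegree := by
    have h1 : ∑ x ∈ s, (q.roots.count x - 1 + 1) = q.natDegree := by
      rw [← hroots, ← Multiset.toFinset_sum_count_eq q.roots]
      exact Finset.sum_congr rfl fun x hx =>
        tsub_add_cancel_of_le (Multiset.count_pos.mpr (Multiset.mem_toFinset.mp hx))
    rw [Finset.sum_add_distrib, Finset.sum_const, smul_eq_mul, mul_one] at h1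
    exact h1
  have hsum_E : E.card ≤ ∑ x ∈ E, f.roots.count x := by
    rw [Finset.card_eq_sum_ones]
    refine Finset.sum_le_sum fun x hx => ?_
    exact Multiset.count_pos.mpr (Multiset.mem_toFinset.mp (hE_sub_t hx))
  have hlow1 : ∑ x ∈ s, (q.roots.count x - 1) ≤ ∑ x ∈ s, f.roots.count x :=
    Finset.sum_le_sum hA
  rw [splits_iff_card_roots, hdf]
  have hupper : Multiset.card f.roots ≤ f.natDegree := f.card_roots'
  rw [hdf] at hupper
  omega

/-- For `α > 0` and `β ∈ ℝ`, the linear map `T` determined by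
`T[x^n] = H_n^α(x - β)` (with `H` the generalized Hermite polynomials) sends every real
polynomial with only real roots to a polynomial with only real roots. -/
theorem stmt_7 (α β : ℝ) (hα : 0 < α)
    (H : ℕ → Polynomial ℝ) (hH0 : H 0 = 1) (hH1 : H 1 = Polynomial.X)
    (hH : ∀ n : ℕ, 2 ≤ n →
      H n = Polynomial.X * H (n - 1) - Polynomial.C (α * ((n : ℝ) - 1)) * H (n - 2))
    (T : Polynomial ℝ →ₗ[ℝ] Polynomial ℝ)
    (hT : ∀ n : ℕ, T (Polynomial.X ^ n) = (H n).comp (Polynomial.X - Polynomial.C β)) :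
    ∀ p : Polynomial ℝ, p.Splits → (T p).Splits := by
  have rec' : ∀ n : ℕ, H (n+1) = X * H n - C (α * n) * H (n-1) := by
    intro n
    cases n with
    | zero => simp [hH1, hH0]
    | succ m =>
      have e1 : m + 2 - 1 = m + 1 := rfl
      have e2 : m + 2 - 2 = m := rfl
      have e3 : α * (((m+2:ℕ):ℝ) - 1) = α * ((m+1:ℕ):ℝ) := by push_cast; ring
      rw [hH (m+2) (by omega), e1, e2, e3]
      rfl
  have D : ∀ n : ℕ, derivative (H n) = C (n : ℝ) * H (n-1) := by
    intro n
    induction n using Nat.strong_induction_on with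
    | _ n ih =>
      match n with
      | 0 => simp [hH0]
      | 1 => simp [hH1, hH0]
      | (m+2) =>
        have e1 : m + 1 - 1 = m := rfl
        have e2 : m + 2 - 1 = m + 1 := rfl
        rw [rec' (m+1), e1, derivative_sub, derivative_mul, derivative_X, derivative_mul,
          derivative_C, ih (m+1) (by omega), e1, ih m (by omega), e2, rec' m]
        push_cast
        simp only [C_add, C_mul, C_1, map_ofNat]
        ring
  have keyc : ∀ n : ℕ, (H (n+1)).comp (X - C β) =
      (X - C β) * (H n).comp (X - C β) - C α * derivative ((H n).comp (X - C β)) := by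
    intro n
    simp only [derivative_comp, derivative_sub, derivative_X, derivative_C, sub_zero,
      one_mul, mul_one]
    rw [D n, rec' n, sub_comp, mul_comp, X_comp, mul_comp, C_comp, mul_comp, C_comp, C_mul]
    ring
  have hTmul : ∀ q : ℝ[X], T (X * q) = (X - C β) * T q - C α * derivative (T q) := by
    intro q
    induction q using Polynomial.induction_on' with
    | add p r hp hr =>
      rw [mul_add, map_add, hp, hr, map_add, derivative_add]
      ring
    | monomial n a =>
      rw [← smul_X_eq_monomial]
      have hx : X * (a • (X:ℝ[X]) ^ n) = a • X ^ (n+1) := by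
        rw [mul_smul_comm, pow_succ, mul_comm]
      rw [hx, map_smul, map_smul, hT, hT, keyc n, derivative_smul, smul_sub]
      simp only [← smul_eq_C_mul]
      rw [smul_comm, mul_smul_comm]
  intro p hp
  by_cases hp0 : p = 0
  · rw [hp0, map_zero]; exact Splits.zero
  have aux : ∀ s : Multiset ℝ,
      (T ((s.map fun a => X - C a).prod)).Splits ∧
        T ((s.map fun a => X - C a).prod) ≠ 0 := by
    intro s
    induction s using Multiset.induction_on with
    | empty =>
      have h1 : (((0 : Multiset ℝ).map fun a => X - C a).prod : ℝ[X]) = 1 := by simp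
      have h2 : T 1 = 1 := by
        have := hT 0
        rw [pow_zero, hH0, one_comp] at this
        exact this
      rw [h1, h2]
      exact ⟨Splits.one, one_ne_zero⟩
    | cons r s ih =>
      have h1 : (((r ::ₘ s).map fun a => X - C a).prod : ℝ[X])
          = (X - C r) * ((s.map fun a => X - C a).prod) := by
        rw [Multiset.map_cons, Multiset.prod_cons]
      rw [h1]
      set P := ((s.map fun a => X - C a).prod : ℝ[X]) with hP
      have h2 : T ((X - C r) * P) = (X - C (β + r)) * T P - C α * derivative (T P) := by
        have h3 : (X - C r) * P = X * P - r • P := by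
          rw [sub_mul, smul_eq_C_mul]
        rw [h3, map_sub, map_smul, hTmul, C_add, smul_eq_C_mul]
        ring
      rw [h2]
      exact step_splits α (β + r) hα (T P) ih.2 ih.1
  have heq := hp.eq_prod_roots
  have : T p = C p.leadingCoeff * T ((p.roots.map fun a => X - C a).prod) := by
    conv_lhs => rw [heq]
    rw [← smul_eq_C_mul, map_smul, smul_eq_C_mul]
  rw [this]
  exact (Splits.C _).mul (aux _).1
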